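/- Assume b1 + τ − d1 − C·x̄ₐ > 0 and −(a1 − τ − d1 − C·ȳ) > σ2·p·C·ȳ/(d2 + σ2). Then the 2×2 matrix A = [[a1 − b1 − τ, σ2], [p·(b1 − d1 + τ), −(d2 + σ2)]] has nonzero determinant, and every eigenvalue of A has strictly negative real part. -/

import Mathlib

lemma quad_root_neg_re (T D : ℝ) (hT : T < 0) (hD : 0 < D) (z : ℂ)
    (heq : z ^ 2 - (T : ℂ) * z + (D : ℂ) = 0) : z.re < 0 := by
  rw [Complex.ext_iff] at heq
  obtain ⟨h1, h2⟩ := heq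
  simp [pow_two, Complex.mul_re, Complex.mul_im] at h1 h2
  rcases eq_or_ne z.im 0 with hy | hy
  · rw [hy] at h1
    by_contra hx
    push_neg at hx
    nlinarith [sq_nonneg z.re]
  · have h3 : z.im * (2 * z.re - T) = 0 := by linarith
    rcases mul_eq_zero.mp h3 with h | h
    · exact absurd h hy
    · linarith

/-- Under the fitness conditions `b1 + τ − d1 − C·x̄ₐ > 0` and
`−(a1 − τ − d1 − C·ȳ) > σ2·p·C·ȳ/(d2+σ2)`, the matrix
`A = [[a1 − b1 − τ, σ2], [p·(b1 − d1 + τ), −(d2+σ2)]]` has nonzero determinant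
and all its eigenvalues have strictly negative real part. -/
theorem three_dim_dominating_matrix_stable
    (a1 b1 d1 d2 τ C σ2 p xabar ybar : ℝ)
    (hd1 : 0 ≤ d1) (ha1 : d1 < a1) (hb1 : d1 < b1) (hd2 : 0 ≤ d2) (hτ : 0 ≤ τ)
    (hC : 0 < C) (hσ2 : 0 < σ2) (hp0 : 0 < p) (hp1 : p < 1)
    (hxabar : xabar = (a1 - d1) * (d2 + σ2) / (C * (d2 + (1 - p) * σ2)))
    (hybar : ybar = (b1 - d1) / C)
    (hfitY : 0 < b1 + τ - d1 - C * xabar)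
    (hfitX : σ2 * p * C * ybar / (d2 + σ2) < -(a1 - τ - d1 - C * ybar))
    (A : Matrix (Fin 2) (Fin 2) ℝ)
    (hA : A = !![a1 - b1 - τ, σ2; p * (b1 - d1 + τ), -(d2 + σ2)]) :
    A.det ≠ 0 ∧
    (∀ z : ℂ, ((A.map Complex.ofReal).charpoly).IsRoot z → z.re < 0) := by
  have hs : 0 < d2 + σ2 := by nlinarith
  have hden : 0 < d2 + (1 - p) * σ2 := by nlinarith
  -- key inequality from hfitY : determinant positivity
  have hCx : C * xabar = (a1 - d1) * (d2 + σ2) / (d2 + (1 - p) * σ2) := by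
    rw [hxabar]; field_simp
  have hkey : (a1 - d1) * (d2 + σ2) < (b1 + τ - d1) * (d2 + (1 - p) * σ2) := by
    rw [hCx] at hfitY
    have := (div_lt_iff₀ hden).mp (by linarith : (a1 - d1) * (d2 + σ2) / (d2 + (1 - p) * σ2) < b1 + τ - d1)
    linarith
  have hCy : C * ybar = b1 - d1 := by rw [hybar]; field_simp
  have hX : σ2 * p * (b1 - d1) / (d2 + σ2) < b1 + τ - a1 := by
    have : σ2 * p * C * ybar = σ2 * p * (b1 - d1) := by rw [mul_assoc, hCy]
    rw [this] at hfitX; linarith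
  have hXnn : 0 ≤ σ2 * p * (b1 - d1) / (d2 + σ2) := by
    exact div_nonneg (le_of_lt (mul_pos (mul_pos hσ2 hp0) (by linarith))) (le_of_lt hs)
  have htr : a1 - b1 - τ < 0 := by linarith
  have hdet : 0 < A.det := by
    rw [hA, Matrix.det_fin_two_of]
    nlinarith
  refine ⟨ne_of_gt hdet, ?_⟩
  intro z hz
  have hmap : A.map Complex.ofReal =
      !![((a1 - b1 - τ : ℝ) : ℂ), ((σ2 : ℝ) : ℂ);
         ((p * (b1 - d1 + τ) : ℝ) : ℂ), ((-(d2 + σ2) : ℝ) : ℂ)] := by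
    subst hA
    ext i j
    fin_cases i <;> fin_cases j <;> simp
  have hT : (A.map Complex.ofReal).trace = ((a1 - b1 - τ - (d2 + σ2) : ℝ) : ℂ) := by
    rw [hmap, Matrix.trace_fin_two_of]
    push_cast; ring
  have hD : (A.map Complex.ofReal).det = ((A.det : ℝ) : ℂ) := by
    rw [hmap, Matrix.det_fin_two_of, hA, Matrix.det_fin_two_of]
    push_cast; ring
  have hcp : (A.map Complex.ofReal).charpoly.eval z =
      (z - ((a1 - b1 - τ : ℝ) : ℂ)) * (z - ((-(d2 + σ2) : ℝ) : ℂ)) -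
        (-((σ2 : ℝ) : ℂ)) * (-((p * (b1 - d1 + τ) : ℝ) : ℂ)) := by
    rw [Matrix.charpoly, Matrix.det_fin_two]
    rw [Matrix.charmatrix_apply_eq, Matrix.charmatrix_apply_eq,
      Matrix.charmatrix_apply_ne _ _ _ (by decide : (0 : Fin 2) ≠ 1),
      Matrix.charmatrix_apply_ne _ _ _ (by decide : (1 : Fin 2) ≠ 0), hmap]
    simp
  rw [Polynomial.IsRoot, hcp] at hz
  have hdetval : A.det = (a1 - b1 - τ) * (-(d2 + σ2)) - σ2 * (p * (b1 - d1 + τ)) := by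
    rw [hA, Matrix.det_fin_two_of]
  have heq : z ^ 2 - ((a1 - b1 - τ - (d2 + σ2) : ℝ) : ℂ) * z + ((A.det : ℝ) : ℂ) = 0 := by
    rw [hdetval]
    push_cast
    push_cast at hz
    linear_combination hz
  exact quad_root_neg_re _ _ (by linarith) hdet z heq
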